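/- A signed measure $\nu$ of finite upper density on $\mathbb{C}$ satisfies the Lindelöf condition $\sup_{r\ge1}\big|\int_{1<|z|\le r} z^{-1}\, d\nu(z)\big| < +\infty$ if and only if its translate $\nu_{\vec w}$ (for any fixed $w \in \mathbb{C}$) satisfies the same condition. -/

import Mathlib

open MeasureTheory Filter Metric
set_option linter.unusedSectionVars false
set_option linter.unusedTactic false

/-- The annulus `{z : r < |z| ≤ R}` in `ℂ`. -/
def annulus (r R : ℝ) : Set ℂ := {z : ℂ | r < ‖z‖ ∧ ‖z‖ ≤ R}

/-- Right logarithmic function of intervals: `∫_{r<|z|≤R} Re⁺(1/z) dν`. -/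
noncomputable def ellP (ν : Measure ℂ) (r R : ℝ) : ℝ :=
  ∫ z in annulus r R, max (1 / z).re 0 ∂ν

/-- Left logarithmic function of intervals: `∫_{r<|z|≤R} Re⁻(1/z) dν`. -/
noncomputable def ellM (ν : Measure ℂ) (r R : ℝ) : ℝ :=
  ∫ z in annulus r R, max (-(1 / z).re) 0 ∂ν

/-- The logarithmic submeasure `ℓ_ν(r,R)`. -/
noncomputable def ell (ν : Measure ℂ) (r R : ℝ) : ℝ := max (ellP ν r R) (ellM ν r R)

/-- Radial counting function `ν^rad(t) = ν(t·𝔻̄)`. -/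
noncomputable def rad (ν : Measure ℂ) (t : ℝ) : ℝ := (ν (Metric.closedBall 0 t)).toReal

/-- Finite upper density: `limsup_{t→∞} ν^rad(t)/t < +∞`. -/
def FiniteUpperDensity (ν : Measure ℂ) : Prop := ∃ C : ℝ, ∀ᶠ t in atTop, rad ν t ≤ C * t

/-- The Lindelöf condition for the signed measure `νp - νm`:
`sup_{r ≥ 1} |∫_{1<|z|≤r} z⁻¹ d(νp - νm)| < +∞`. -/
def LindelofCondition (νp νm : Measure ℂ) : Prop :=
  ∃ C : ℝ, ∀ r ≥ (1 : ℝ),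
    ‖(∫ z in annulus 1 r, z⁻¹ ∂νp) - ∫ z in annulus 1 r, z⁻¹ ∂νm‖ ≤ C

section Aux
variable (ν : Measure ℂ) [IsFiniteMeasureOnCompacts ν]

lemma annulus_meas (r R : ℝ) : MeasurableSet (annulus r R) :=
  (measurableSet_lt measurable_const measurable_norm).inter
    (measurableSet_le measurable_norm measurable_const)

lemma annulus_sub (r R : ℝ) : annulus r R ⊆ closedBall 0 R := fun z hz => by
  simpa [Complex.dist_eq] using hz.2

lemma meas_lt_top {S : Set ℂ} {R : ℝ} (h : S ⊆ closedBall 0 R) : ν S < ⊤ :=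
  lt_of_le_of_lt (measure_mono h) (isCompact_closedBall 0 R).measure_lt_top

lemma toReal_le_rad {S : Set ℂ} {R : ℝ} (h : S ⊆ closedBall 0 R) : (ν S).toReal ≤ rad ν R :=
  ENNReal.toReal_mono ((isCompact_closedBall 0 R).measure_lt_top).ne (measure_mono h)

lemma rad_nonneg (t : ℝ) : 0 ≤ rad ν t := ENNReal.toReal_nonneg

variable {E : Type*} [NormedAddCommGroup E] [NormedSpace ℝ E]

lemma intOn {S : Set ℂ} {R M : ℝ} (hsub : S ⊆ closedBall 0 R) {f : ℂ → E}
    (hf : AEStronglyMeasurable f ν) (hS : MeasurableSet S) (hb : ∀ z ∈ S, ‖f z‖ ≤ M) :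
    IntegrableOn f S ν :=
  Measure.integrableOn_of_bounded (meas_lt_top ν hsub).ne hf
    ((ae_restrict_iff' hS).2 (ae_of_all _ hb))

lemma normInt {S : Set ℂ} {R M : ℝ} (hsub : S ⊆ closedBall 0 R) (hM : 0 ≤ M) {f : ℂ → E}
    (hf : AEStronglyMeasurable f (ν.restrict S)) (hb : ∀ z ∈ S, ‖f z‖ ≤ M) :
    ‖∫ z in S, f z ∂ν‖ ≤ M * rad ν R :=
  calc ‖∫ z in S, f z ∂ν‖ ≤ M * (ν S).toReal :=
        by exact norm_setIntegral_le_of_norm_le_const (meas_lt_top ν hsub) hb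
  _ ≤ M * rad ν R := mul_le_mul_of_nonneg_left (toReal_le_rad ν hsub) hM

lemma invsq_meas : AEStronglyMeasurable (fun z : ℂ => ‖z‖⁻¹ ^ 2) ν :=
  ((measurable_norm.inv.pow measurable_const)).aestronglyMeasurable

lemma intOn_invsq {a b : ℝ} (ha : 1 ≤ a) :
    IntegrableOn (fun z : ℂ => ‖z‖⁻¹ ^ 2) (annulus a b) ν := by
  apply intOn ν (annulus_sub a b) (invsq_meas ν) (annulus_meas a b) (M := 1)
  intro z hz
  have h1 : (1:ℝ) < ‖z‖ := lt_of_le_of_lt ha hz.1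
  have h0 : (0:ℝ) < ‖z‖ := lt_trans one_pos h1
  rw [Real.norm_eq_abs, abs_of_nonneg (by positivity)]
  have : ‖z‖⁻¹ ≤ 1 := by
    rw [inv_le_one_iff₀]; right; exact h1.le
  calc ‖z‖⁻¹ ^ 2 ≤ 1 ^ 2 := pow_le_pow_left₀ (by positivity) this 2
  _ = 1 := one_pow 2

lemma dyadic (C R0 : ℝ) (hR0 : 1 ≤ R0) (hC : 1 ≤ C)
    (hub : ∀ t ≥ R0, rad ν t ≤ C * t) (r : ℝ) :
    ∫ z in annulus R0 r, ‖z‖⁻¹ ^ 2 ∂ν ≤ 4 * C / R0 := by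
  have hR0pos : (0:ℝ) < R0 := lt_of_lt_of_le one_pos hR0
  have hCpos : (0:ℝ) < C := lt_of_lt_of_le one_pos hC
  -- step: for a ≥ R0, ∫ over annulus R0 (2a) ≤ ∫ over annulus R0 a + 2C/a
  have step : ∀ a : ℝ, R0 ≤ a →
      ∫ z in annulus R0 (2*a), ‖z‖⁻¹ ^ 2 ∂ν ≤ (∫ z in annulus R0 a, ‖z‖⁻¹ ^ 2 ∂ν) + 2*C/a := by
    intro a ha
    have ha1 : (1:ℝ) ≤ a := le_trans hR0 ha
    have hapos : (0:ℝ) < a := lt_of_lt_of_le one_pos ha1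
    have hsplit := integral_inter_add_diff (μ := ν) (t := closedBall (0:ℂ) a)
      measurableSet_closedBall (intOn_invsq ν (b := 2*a) hR0)
    have e1 : annulus R0 (2*a) ∩ closedBall (0:ℂ) a = annulus R0 a := by
      ext z
      simp only [annulus, Set.mem_inter_iff, Set.mem_setOf_eq, mem_closedBall,
        Complex.dist_eq, sub_zero]
      constructor
      · rintro ⟨⟨h1, _⟩, h3⟩; exact ⟨h1, h3⟩
      · rintro ⟨h1, h2⟩; exact ⟨⟨h1, le_trans h2 (by linarith)⟩, h2⟩
    have e2 : annulus R0 (2*a) \ closedBall (0:ℂ) a = annulus a (2*a) := by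
      ext z
      simp only [annulus, Set.mem_diff, Set.mem_setOf_eq, mem_closedBall,
        Complex.dist_eq, sub_zero, not_le]
      constructor
      · rintro ⟨⟨_, h2⟩, h3⟩; exact ⟨h3, h2⟩
      · rintro ⟨h1, h2⟩; exact ⟨⟨lt_of_le_of_lt ha h1, h2⟩, h1⟩
    rw [e1, e2] at hsplit
    have hbd : ∫ z in annulus a (2*a), ‖z‖⁻¹ ^ 2 ∂ν ≤ 2*C/a := by
      have hb : ∀ z ∈ annulus a (2*a), ‖‖z‖⁻¹ ^ 2‖ ≤ a⁻¹ ^ 2 := by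
        intro z hz
        have h1 : a < ‖z‖ := hz.1
        have h0 : (0:ℝ) < ‖z‖ := lt_trans hapos h1
        rw [Real.norm_eq_abs, abs_of_nonneg (by positivity)]
        exact pow_le_pow_left₀ (by positivity) (inv_anti₀ hapos h1.le) 2
      have := normInt ν (annulus_sub a (2*a)) (by positivity)
        ((invsq_meas ν).restrict) hb
      have hrad : rad ν (2*a) ≤ C * (2*a) := hub (2*a) (by linarith)
      calc ∫ z in annulus a (2*a), ‖z‖⁻¹ ^ 2 ∂ν
          ≤ ‖∫ z in annulus a (2*a), ‖z‖⁻¹ ^ 2 ∂ν‖ := le_abs_self _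
        _ ≤ a⁻¹ ^ 2 * rad ν (2*a) := this
        _ ≤ a⁻¹ ^ 2 * (C * (2*a)) := by
            apply mul_le_mul_of_nonneg_left hrad (by positivity)
        _ ≤ 2*C/a := by
            rw [div_eq_mul_inv]
            have : a⁻¹ ^ 2 * (C * (2*a)) = 2 * C * a⁻¹ * (a * a⁻¹) := by ring
            rw [this, mul_inv_cancel₀ (ne_of_gt hapos), mul_one]
      done
    linarith
  -- monotonicity in the outer radius
  have mono : ∀ a b : ℝ, a ≤ b →
      ∫ z in annulus R0 a, ‖z‖⁻¹ ^ 2 ∂ν ≤ ∫ z in annulus R0 b, ‖z‖⁻¹ ^ 2 ∂ν := by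
    intro a b hab
    apply setIntegral_mono_set (intOn_invsq ν hR0)
    · exact ae_of_all _ (fun z => by positivity)
    · exact HasSubset.Subset.eventuallyLE (fun z hz => ⟨hz.1, le_trans hz.2 hab⟩)
  -- induction over dyadic scales
  have ind : ∀ n : ℕ, ∫ z in annulus R0 (R0 * 2^n), ‖z‖⁻¹ ^ 2 ∂ν ≤ 4*C/R0 * (1 - (1/2)^n) := by
    intro n
    induction n with
    | zero =>
        have he : annulus R0 (R0 * 2^0) = ∅ := by
          ext z; simp [annulus]
        rw [he]; simp
    | succ n ih =>
        have h2n : R0 ≤ R0 * 2^n :=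
          le_mul_of_one_le_right hR0pos.le (one_le_pow₀ one_le_two)
        have hstep := step (R0 * 2^n) h2n
        have harr : 2 * (R0 * 2^n) = R0 * 2^(n+1) := by ring
        rw [harr] at hstep
        have hpow : (0:ℝ) < 2^n := pow_pos two_pos n
        calc ∫ z in annulus R0 (R0 * 2^(n+1)), ‖z‖⁻¹ ^ 2 ∂ν
            ≤ (∫ z in annulus R0 (R0 * 2^n), ‖z‖⁻¹ ^ 2 ∂ν) + 2*C/(R0 * 2^n) := hstep
          _ ≤ 4*C/R0 * (1 - (1/2)^n) + 2*C/(R0 * 2^n) := by linarith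
          _ = 4*C/R0 * (1 - (1/2)^(n+1)) := by
              field_simp
              have h12 : (1/2:ℝ)^n * 2^n = 1 := by rw [← mul_pow]; norm_num
              linear_combination (-2:ℝ) * h12
    done
  -- choose n with r ≤ R0 * 2^n
  obtain ⟨n, hn⟩ := pow_unbounded_of_one_lt (r / R0) (one_lt_two (α := ℝ))
  have hrn : r ≤ R0 * 2^n := by
    rw [div_lt_iff₀ hR0pos] at hn
    nlinarith
  calc ∫ z in annulus R0 r, ‖z‖⁻¹ ^ 2 ∂ν
      ≤ ∫ z in annulus R0 (R0 * 2^n), ‖z‖⁻¹ ^ 2 ∂ν := mono r (R0 * 2^n) hrn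
    _ ≤ 4*C/R0 * (1 - (1/2)^n) := ind n
    _ ≤ 4*C/R0 := by
        have hp : (0:ℝ) ≤ (1/2:ℝ)^n := by positivity
        nlinarith [div_pos (by linarith : (0:ℝ) < 4*C) hR0pos]
end Aux

lemma key (ν : Measure ℂ) [IsFiniteMeasureOnCompacts ν] (h : FiniteUpperDensity ν) (w : ℂ) :
    ∃ C : ℝ, ∀ r ≥ (1:ℝ),
      ‖(∫ z in annulus 1 r, z⁻¹ ∂(Measure.map (· + w) ν)) - ∫ z in annulus 1 r, z⁻¹ ∂ν‖ ≤ C := by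
  obtain ⟨C0, hC0⟩ := h
  rw [eventually_atTop] at hC0
  obtain ⟨t0, ht0⟩ := hC0
  set W : ℝ := ‖w‖ with hWdef
  have hW : 0 ≤ W := norm_nonneg w
  set C : ℝ := max C0 1 with hCdef
  have hC1 : 1 ≤ C := le_max_right _ _
  set R0 : ℝ := max (max t0 1) (2*W+2) with hR0def
  have hR01 : 1 ≤ R0 := le_trans (le_max_right t0 1) (le_max_left _ _)
  have hR0W : 2*W+2 ≤ R0 := le_max_right _ _
  have hR0t0 : t0 ≤ R0 := le_trans (le_max_left t0 1) (le_max_left _ _)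
  have hR0pos : (0:ℝ) < R0 := lt_of_lt_of_le one_pos hR01
  have hCpos : (0:ℝ) < C := lt_of_lt_of_le one_pos hC1
  have hub : ∀ t ≥ R0, rad ν t ≤ C * t := by
    intro t ht
    have htpos : (0:ℝ) < t := lt_of_lt_of_le hR0pos ht
    calc rad ν t ≤ C0 * t := ht0 t (le_trans hR0t0 ht)
    _ ≤ C * t := mul_le_mul_of_nonneg_right (le_max_left _ _) htpos.le
  have hD := dyadic ν C R0 hR01 hC1 hub
  have hemb : MeasurableEmbedding (fun z : ℂ => z + w) :=
    (MeasurableEquiv.addRight w).measurableEmbedding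
  have hmf : AEStronglyMeasurable (fun ζ : ℂ => ζ⁻¹) ν := measurable_inv.aestronglyMeasurable
  have hmg : AEStronglyMeasurable (fun ζ : ℂ => (ζ + w)⁻¹) ν :=
    ((measurable_add_const w).inv).aestronglyMeasurable
  have norm_tri : ∀ ζ : ℂ, ‖ζ‖ ≤ ‖ζ + w‖ + W := by
    intro ζ
    calc ‖ζ‖ = ‖(ζ + w) - w‖ := by rw [add_sub_cancel_right]
    _ ≤ ‖ζ + w‖ + ‖w‖ := norm_sub_le _ _
  have norm_tri' : ∀ ζ : ℂ, ‖ζ‖ - W ≤ ‖ζ + w‖ := by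
    intro ζ
    calc ‖ζ‖ - W = ‖(ζ + w) + (-w)‖ - W := by rw [add_neg_cancel_right]
    _ ≤ (‖ζ + w‖ + ‖(-w : ℂ)‖) - W := by linarith [norm_add_le (ζ + w) (-w)]
    _ = ‖ζ + w‖ := by rw [norm_neg]; ring
  -- nonnegativity of pieces of the final constant
  have hr1 := rad_nonneg ν 1
  have hr1W := rad_nonneg ν (1+W)
  have hrR0 := rad_nonneg ν R0
  have hrR0W := rad_nonneg ν (R0+W)
  have hWC : 0 ≤ 2*W*(4*C/R0) := by positivity
  have hWrad : 0 ≤ W * rad ν R0 := mul_nonneg hW hrR0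
  refine ⟨2*rad ν (R0+W) + (W * rad ν R0 + 2*W*(4*C/R0) + rad ν (1+W) + 2*C + rad ν 1 + 3*C), ?_⟩
  intro r hr
  have hrpos : (0:ℝ) < r := lt_of_lt_of_le one_pos hr
  set A : Set ℂ := annulus 1 r with hAdef
  set B : Set ℂ := (fun z : ℂ => z + w) ⁻¹' annulus 1 r with hBdef
  have hBmem : ∀ ζ : ℂ, ζ ∈ B → 1 < ‖ζ + w‖ ∧ ‖ζ + w‖ ≤ r := fun ζ hζ => hζ
  have hBmem' : ∀ ζ : ℂ, (1 < ‖ζ + w‖ ∧ ‖ζ + w‖ ≤ r) → ζ ∈ B := fun ζ hζ => hζ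
  have hmapeq : (∫ z in annulus 1 r, z⁻¹ ∂(Measure.map (· + w) ν)) = ∫ ζ in B, (ζ + w)⁻¹ ∂ν :=
    hemb.setIntegral_map (fun z => z⁻¹) (annulus 1 r)
  have hAmeas : MeasurableSet A := annulus_meas 1 r
  have hBmeas : MeasurableSet B := (measurable_add_const w) (annulus_meas 1 r)
  have hAsub : A ⊆ closedBall 0 r := annulus_sub 1 r
  have hBsub : B ⊆ closedBall 0 (r + W) := by
    intro ζ hζ
    rw [mem_closedBall_zero_iff]
    have := (hBmem ζ hζ).2
    linarith [norm_tri ζ]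
  have hfb : ∀ ζ ∈ A, ‖ζ⁻¹‖ ≤ 1 := by
    intro ζ hζ
    rw [norm_inv]
    rw [inv_le_one_iff₀]; right; exact hζ.1.le
  have hgb : ∀ ζ ∈ B, ‖(ζ + w)⁻¹‖ ≤ 1 := by
    intro ζ hζ
    rw [norm_inv]
    rw [inv_le_one_iff₀]; right; exact (hBmem ζ hζ).1.le
  have hIA : IntegrableOn (fun ζ : ℂ => ζ⁻¹) A ν := intOn ν hAsub hmf hAmeas hfb
  have hIB : IntegrableOn (fun ζ : ℂ => (ζ + w)⁻¹) B ν := intOn ν hBsub hmg hBmeas hgb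
  rw [hmapeq]
  rcases le_or_gt r R0 with hrR | hrR
  · -- small r: trivial bound
    have h1 : ‖∫ ζ in B, (ζ + w)⁻¹ ∂ν‖ ≤ 1 * rad ν (R0 + W) :=
      normInt ν (hBsub.trans (closedBall_subset_closedBall (by linarith))) one_pos.le
        hmg.restrict hgb
    have h2 : ‖∫ ζ in A, ζ⁻¹ ∂ν‖ ≤ 1 * rad ν (R0 + W) :=
      normInt ν (hAsub.trans (closedBall_subset_closedBall (by linarith))) one_pos.le
        hmf.restrict hfb
    calc ‖(∫ ζ in B, (ζ + w)⁻¹ ∂ν) - ∫ ζ in A, ζ⁻¹ ∂ν‖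
        ≤ ‖∫ ζ in B, (ζ + w)⁻¹ ∂ν‖ + ‖∫ ζ in A, ζ⁻¹ ∂ν‖ := norm_sub_le _ _
      _ ≤ 2*rad ν (R0+W) + (W * rad ν R0 + 2*W*(4*C/R0) + rad ν (1+W) + 2*C + rad ν 1 + 3*C) := by
          linarith
  · -- large r
    have hr2W : 2*W + 2 ≤ r := le_trans hR0W hrR.le
    have hWr2 : W ≤ r/2 := by linarith
    -- decomposition
    have eB := integral_inter_add_diff (μ := ν) (s := B) (t := A) hAmeas hIB
    have eA := integral_inter_add_diff (μ := ν) (s := A) (t := B) hBmeas hIA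
    rw [Set.inter_comm B A] at eB
    have hIgAB : IntegrableOn (fun ζ : ℂ => (ζ + w)⁻¹) (A ∩ B) ν :=
      hIB.mono_set Set.inter_subset_right
    have hIfAB : IntegrableOn (fun ζ : ℂ => ζ⁻¹) (A ∩ B) ν :=
      hIA.mono_set Set.inter_subset_left
    have hsub_int : ∫ ζ in A ∩ B, ((ζ + w)⁻¹ - ζ⁻¹) ∂ν
        = (∫ ζ in A ∩ B, (ζ + w)⁻¹ ∂ν) - ∫ ζ in A ∩ B, ζ⁻¹ ∂ν := integral_sub hIgAB hIfAB
    have main_eq : (∫ ζ in B, (ζ + w)⁻¹ ∂ν) - ∫ ζ in A, ζ⁻¹ ∂ν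
        = (∫ ζ in A ∩ B, ((ζ + w)⁻¹ - ζ⁻¹) ∂ν)
          + (∫ ζ in B \ A, (ζ + w)⁻¹ ∂ν) - ∫ ζ in A \ B, ζ⁻¹ ∂ν := by
      rw [hsub_int, ← eB, ← eA]; ring
    -- pointwise formula for the difference on A ∩ B
    have hdiff_norm : ∀ ζ ∈ A ∩ B, ‖(ζ + w)⁻¹ - ζ⁻¹‖ = W / (‖ζ‖ * ‖ζ + w‖) := by
      intro ζ hζ
      have h1 : (1:ℝ) < ‖ζ‖ := hζ.1.1
      have h2 : (1:ℝ) < ‖ζ + w‖ := (hBmem ζ hζ.2).1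
      have hζ0 : ζ ≠ 0 := by
        intro hh; rw [hh, norm_zero] at h1; linarith
      have hζw0 : ζ + w ≠ 0 := by
        intro hh; rw [hh, norm_zero] at h2; linarith
      have he : (ζ + w)⁻¹ - ζ⁻¹ = -w / (ζ * (ζ + w)) := by
        rw [inv_sub_inv hζw0 hζ0]
        ring
      rw [he, norm_div, norm_neg, norm_mul]
    -- term (i)
    have hIabs : IntegrableOn (fun ζ : ℂ => ‖(ζ + w)⁻¹ - ζ⁻¹‖) (A ∩ B) ν :=
      (hIgAB.sub hIfAB).norm
    have esplit := integral_inter_add_diff (μ := ν) (s := A ∩ B) (t := closedBall 0 R0)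
      measurableSet_closedBall hIabs
    have p1 : ∫ ζ in (A ∩ B) ∩ closedBall 0 R0, ‖(ζ + w)⁻¹ - ζ⁻¹‖ ∂ν ≤ W * rad ν R0 := by
      have hb : ∀ ζ ∈ (A ∩ B) ∩ closedBall 0 R0, ‖‖(ζ + w)⁻¹ - ζ⁻¹‖‖ ≤ W := by
        intro ζ hζ
        rw [norm_norm, hdiff_norm ζ hζ.1]
        have h1 : (1:ℝ) < ‖ζ‖ := hζ.1.1.1
        have h2 : (1:ℝ) < ‖ζ + w‖ := (hBmem ζ hζ.1.2).1
        exact div_le_self hW (by nlinarith)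
      have hn := normInt ν (Set.inter_subset_right : (A ∩ B) ∩ closedBall 0 R0 ⊆ _)
        hW (((hmg.sub hmf).norm).restrict) hb
      exact le_trans (Real.le_norm_self _) hn
    have p2 : ∫ ζ in (A ∩ B) \ closedBall 0 R0, ‖(ζ + w)⁻¹ - ζ⁻¹‖ ∂ν ≤ 2*W*(4*C/R0) := by
      have hSsub : (A ∩ B) \ closedBall 0 R0 ⊆ annulus R0 r := by
        intro ζ hζ
        refine ⟨?_, hζ.1.1.2⟩
        have := hζ.2
        rw [mem_closedBall_zero_iff] at this
        exact lt_of_not_ge this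
      have hSmeas : MeasurableSet ((A ∩ B) \ closedBall 0 R0) :=
        (hAmeas.inter hBmeas).diff measurableSet_closedBall
      have hmono1 : ∀ ζ ∈ (A ∩ B) \ closedBall 0 R0,
          ‖(ζ + w)⁻¹ - ζ⁻¹‖ ≤ 2*W*(‖ζ‖⁻¹^2) := by
        intro ζ hζ
        rw [hdiff_norm ζ hζ.1]
        have hz : R0 < ‖ζ‖ := (hSsub hζ).1
        have hζpos : (0:ℝ) < ‖ζ‖ := lt_trans hR0pos hz
        have hhalf : ‖ζ‖/2 ≤ ‖ζ + w‖ := by linarith [norm_tri' ζ]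
        have step1 : W / (‖ζ‖ * ‖ζ + w‖) ≤ W / (‖ζ‖ * (‖ζ‖/2)) := by
          gcongr
        have step2 : W / (‖ζ‖ * (‖ζ‖/2)) = 2*W*(‖ζ‖⁻¹^2) := by
          field_simp
        linarith
      have hIinv : IntegrableOn (fun ζ : ℂ => 2*W*(‖ζ‖⁻¹^2)) (annulus R0 r) ν :=
        (intOn_invsq ν hR01).const_mul (2*W)
      calc ∫ ζ in (A ∩ B) \ closedBall 0 R0, ‖(ζ + w)⁻¹ - ζ⁻¹‖ ∂ν
          ≤ ∫ ζ in (A ∩ B) \ closedBall 0 R0, 2*W*(‖ζ‖⁻¹^2) ∂ν :=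
            setIntegral_mono_on (hIabs.mono_set Set.diff_subset)
              (hIinv.mono_set hSsub) hSmeas hmono1
        _ ≤ ∫ ζ in annulus R0 r, 2*W*(‖ζ‖⁻¹^2) ∂ν := by
            apply setIntegral_mono_set hIinv
            · exact ae_of_all _ (fun ζ => by positivity)
            · exact HasSubset.Subset.eventuallyLE hSsub
        _ = 2*W * ∫ ζ in annulus R0 r, ‖ζ‖⁻¹^2 ∂ν := integral_const_mul (2*W) _
        _ ≤ 2*W*(4*C/R0) := mul_le_mul_of_nonneg_left (hD r) (by positivity)
    have t1 : ‖∫ ζ in A ∩ B, ((ζ + w)⁻¹ - ζ⁻¹) ∂ν‖ ≤ W * rad ν R0 + 2*W*(4*C/R0) := by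
      calc ‖∫ ζ in A ∩ B, ((ζ + w)⁻¹ - ζ⁻¹) ∂ν‖
          ≤ ∫ ζ in A ∩ B, ‖(ζ + w)⁻¹ - ζ⁻¹‖ ∂ν := norm_integral_le_integral_norm _
        _ = (∫ ζ in (A ∩ B) ∩ closedBall 0 R0, ‖(ζ + w)⁻¹ - ζ⁻¹‖ ∂ν)
            + ∫ ζ in (A ∩ B) \ closedBall 0 R0, ‖(ζ + w)⁻¹ - ζ⁻¹‖ ∂ν := esplit.symm
        _ ≤ W * rad ν R0 + 2*W*(4*C/R0) := by linarith
    -- term (iii): A \ B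
    have t3 : ‖∫ ζ in A \ B, ζ⁻¹ ∂ν‖ ≤ rad ν (1+W) + 2*C := by
      set T : Set ℂ := (fun ζ : ℂ => ζ + w) ⁻¹' closedBall 0 1 with hTdef
      have hTmeas : MeasurableSet T := (measurable_add_const w) measurableSet_closedBall
      have hIfAdB : IntegrableOn (fun ζ : ℂ => ζ⁻¹) (A \ B) ν := hIA.mono_set Set.diff_subset
      have esA := integral_inter_add_diff (μ := ν) (s := A \ B) (t := T) hTmeas hIfAdB
      have q1 : ‖∫ ζ in (A \ B) ∩ T, ζ⁻¹ ∂ν‖ ≤ 1 * rad ν (1+W) := by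
        apply normInt ν (R := 1+W) ?_ one_pos.le hmf.restrict
          (fun ζ hζ => hfb ζ hζ.1.1)
        intro ζ hζ
        rw [mem_closedBall_zero_iff]
        have : ‖ζ + w‖ ≤ 1 := mem_closedBall_zero_iff.1 hζ.2
        linarith [norm_tri ζ]
      have q2 : ‖∫ ζ in (A \ B) \ T, ζ⁻¹ ∂ν‖ ≤ 2*C := by
        have hb : ∀ ζ ∈ (A \ B) \ T, ‖ζ⁻¹‖ ≤ 2/r := by
          intro ζ hζ
          have hA1 : (1:ℝ) < ‖ζ‖ := hζ.1.1.1
          have hnT : ¬ (‖ζ + w‖ ≤ 1) := fun hc => hζ.2 (mem_closedBall_zero_iff.2 hc)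
          have h1w : (1:ℝ) < ‖ζ + w‖ := lt_of_not_ge hnT
          have hrw : r < ‖ζ + w‖ := by
            by_contra hc
            exact hζ.1.2 (hBmem' ζ ⟨h1w, le_of_not_gt hc⟩)
          have hhalf : r/2 ≤ ‖ζ‖ := by linarith [norm_add_le ζ w, hWdef]
          rw [norm_inv]
          calc ‖ζ‖⁻¹ ≤ (r/2)⁻¹ := inv_anti₀ (by positivity) hhalf
          _ = 2/r := by rw [inv_div]
        have hn := normInt ν (R := r)
          (fun ζ (hζ : ζ ∈ (A \ B) \ T) => hAsub hζ.1.1) (by positivity) hmf.restrict hb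
        calc ‖∫ ζ in (A \ B) \ T, ζ⁻¹ ∂ν‖ ≤ (2/r) * rad ν r := hn
        _ ≤ (2/r) * (C * r) := mul_le_mul_of_nonneg_left (hub r hrR.le) (by positivity)
        _ = 2*C := by field_simp
      calc ‖∫ ζ in A \ B, ζ⁻¹ ∂ν‖
          = ‖(∫ ζ in (A \ B) ∩ T, ζ⁻¹ ∂ν) + ∫ ζ in (A \ B) \ T, ζ⁻¹ ∂ν‖ := by rw [esA]
        _ ≤ ‖∫ ζ in (A \ B) ∩ T, ζ⁻¹ ∂ν‖ + ‖∫ ζ in (A \ B) \ T, ζ⁻¹ ∂ν‖ := norm_add_le _ _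
        _ ≤ rad ν (1+W) + 2*C := by linarith
    -- term (ii): B \ A
    have t2 : ‖∫ ζ in B \ A, (ζ + w)⁻¹ ∂ν‖ ≤ rad ν 1 + 3*C := by
      have hIgBdA : IntegrableOn (fun ζ : ℂ => (ζ + w)⁻¹) (B \ A) ν :=
        hIB.mono_set Set.diff_subset
      have esB := integral_inter_add_diff (μ := ν) (s := B \ A) (t := closedBall 0 1)
        measurableSet_closedBall hIgBdA
      have q1 : ‖∫ ζ in (B \ A) ∩ closedBall 0 1, (ζ + w)⁻¹ ∂ν‖ ≤ 1 * rad ν 1 := by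
        apply normInt ν (R := 1) (Set.inter_subset_right) one_pos.le hmg.restrict
        intro ζ hζ
        exact hgb ζ hζ.1.1
      have q2 : ‖∫ ζ in (B \ A) \ closedBall 0 1, (ζ + w)⁻¹ ∂ν‖ ≤ 3*C := by
        have hb : ∀ ζ ∈ (B \ A) \ closedBall 0 1, ‖(ζ + w)⁻¹‖ ≤ 2/r := by
          intro ζ hζ
          have h1 : (1:ℝ) < ‖ζ‖ := by
            have := hζ.2
            rw [mem_closedBall_zero_iff] at this
            exact lt_of_not_ge this
          have hrz : r < ‖ζ‖ := by
            by_contra hc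
            exact hζ.1.2 ⟨h1, le_of_not_gt hc⟩
          have hhalf : r/2 ≤ ‖ζ + w‖ := by linarith [norm_tri' ζ]
          rw [norm_inv]
          calc ‖ζ + w‖⁻¹ ≤ (r/2)⁻¹ := inv_anti₀ (by positivity) hhalf
          _ = 2/r := by rw [inv_div]
        have hn := normInt ν (R := r + W)
          (fun ζ (hζ : ζ ∈ (B \ A) \ closedBall 0 1) => hBsub hζ.1.1) (by positivity)
          hmg.restrict hb
        have hradW : rad ν (r + W) ≤ C * (r + W) := hub (r + W) (by linarith)
        calc ‖∫ ζ in (B \ A) \ closedBall 0 1, (ζ + w)⁻¹ ∂ν‖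
            ≤ (2/r) * rad ν (r + W) := hn
          _ ≤ (2/r) * (C * (r + W)) := mul_le_mul_of_nonneg_left hradW (by positivity)
          _ ≤ (2/r) * (C * (3/2 * r)) := by
              apply mul_le_mul_of_nonneg_left _ (by positivity)
              apply mul_le_mul_of_nonneg_left (by linarith) hCpos.le
          _ = 3*C := by field_simp
      calc ‖∫ ζ in B \ A, (ζ + w)⁻¹ ∂ν‖
          = ‖(∫ ζ in (B \ A) ∩ closedBall 0 1, (ζ + w)⁻¹ ∂ν)
            + ∫ ζ in (B \ A) \ closedBall 0 1, (ζ + w)⁻¹ ∂ν‖ := by rw [esB]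
        _ ≤ ‖∫ ζ in (B \ A) ∩ closedBall 0 1, (ζ + w)⁻¹ ∂ν‖
            + ‖∫ ζ in (B \ A) \ closedBall 0 1, (ζ + w)⁻¹ ∂ν‖ := norm_add_le _ _
        _ ≤ rad ν 1 + 3*C := by linarith
    rw [main_eq]
    calc ‖(∫ ζ in A ∩ B, ((ζ + w)⁻¹ - ζ⁻¹) ∂ν)
          + (∫ ζ in B \ A, (ζ + w)⁻¹ ∂ν) - ∫ ζ in A \ B, ζ⁻¹ ∂ν‖
        ≤ ‖(∫ ζ in A ∩ B, ((ζ + w)⁻¹ - ζ⁻¹) ∂ν) + ∫ ζ in B \ A, (ζ + w)⁻¹ ∂ν‖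
          + ‖∫ ζ in A \ B, ζ⁻¹ ∂ν‖ := norm_sub_le _ _
      _ ≤ ‖∫ ζ in A ∩ B, ((ζ + w)⁻¹ - ζ⁻¹) ∂ν‖ + ‖∫ ζ in B \ A, (ζ + w)⁻¹ ∂ν‖
          + ‖∫ ζ in A \ B, ζ⁻¹ ∂ν‖ := by
            linarith [norm_add_le (∫ ζ in A ∩ B, ((ζ + w)⁻¹ - ζ⁻¹) ∂ν)
              (∫ ζ in B \ A, (ζ + w)⁻¹ ∂ν)]
      _ ≤ 2*rad ν (R0+W) + (W * rad ν R0 + 2*W*(4*C/R0) + rad ν (1+W) + 2*C + rad ν 1 + 3*C) := by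
            linarith

lemma isFiniteOnCompacts_map (ν : Measure ℂ) [IsFiniteMeasureOnCompacts ν] (w : ℂ) :
    IsFiniteMeasureOnCompacts (Measure.map (· + w) ν) := by
  constructor
  intro K hK
  rw [Measure.map_apply (measurable_add_const w) hK.measurableSet]
  exact IsCompact.measure_lt_top ((Homeomorph.addRight w).isCompact_preimage.2 hK)

lemma fud_map (ν : Measure ℂ) [IsFiniteMeasureOnCompacts ν] (h : FiniteUpperDensity ν)
    (w : ℂ) : FiniteUpperDensity (Measure.map (· + w) ν) := by
  obtain ⟨C0, hC0⟩ := h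
  rw [eventually_atTop] at hC0
  obtain ⟨t0, ht0⟩ := hC0
  set W : ℝ := ‖w‖ with hWdef
  have hW : 0 ≤ W := norm_nonneg w
  set C : ℝ := max C0 1 with hCdef
  have hC1 : 1 ≤ C := le_max_right _ _
  refine ⟨2*C, ?_⟩
  rw [eventually_atTop]
  refine ⟨max (max t0 1) W, fun t ht => ?_⟩
  have ht1 : (1:ℝ) ≤ t := le_trans (le_trans (le_max_right t0 1) (le_max_left _ _)) ht
  have htW : W ≤ t := le_trans (le_max_right _ _) ht
  have htt0 : t0 ≤ t := le_trans (le_trans (le_max_left t0 1) (le_max_left _ _)) ht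
  have hmap : rad (Measure.map (· + w) ν) t ≤ rad ν (t + W) := by
    unfold rad
    rw [Measure.map_apply (measurable_add_const w) measurableSet_closedBall]
    apply ENNReal.toReal_mono ((isCompact_closedBall (0:ℂ) (t+W)).measure_lt_top).ne
    apply measure_mono
    intro ζ hζ
    rw [Set.mem_preimage, mem_closedBall_zero_iff] at hζ
    rw [mem_closedBall_zero_iff]
    calc ‖ζ‖ = ‖(ζ + w) - w‖ := by rw [add_sub_cancel_right]
    _ ≤ ‖ζ + w‖ + ‖w‖ := norm_sub_le _ _
    _ ≤ t + W := by linarith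
  calc rad (Measure.map (· + w) ν) t ≤ rad ν (t + W) := hmap
  _ ≤ C0 * (t + W) := ht0 (t + W) (by linarith)
  _ ≤ C * (t + W) := mul_le_mul_of_nonneg_right (le_max_left _ _) (by linarith)
  _ ≤ C * (2*t) := mul_le_mul_of_nonneg_left (by linarith) (by linarith)
  _ = 2*C*t := by ring

lemma map_cancel (ν : Measure ℂ) (w : ℂ) :
    Measure.map (· + (-w)) (Measure.map (· + w) ν) = ν := by
  rw [Measure.map_map (measurable_add_const (-w)) (measurable_add_const w)]
  have : ((fun z : ℂ => z + (-w)) ∘ fun z : ℂ => z + w) = id := by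
    funext z; simp
  rw [this, Measure.map_id]

lemma lind_mp (νp νm : Measure ℂ)
    [IsFiniteMeasureOnCompacts νp] [IsFiniteMeasureOnCompacts νm]
    (hp : FiniteUpperDensity νp) (hm : FiniteUpperDensity νm) (w : ℂ)
    (h : LindelofCondition νp νm) :
    LindelofCondition (Measure.map (· + w) νp) (Measure.map (· + w) νm) := by
  obtain ⟨C, hC⟩ := h
  obtain ⟨Cp, hCp⟩ := key νp hp w
  obtain ⟨Cm, hCm⟩ := key νm hm w
  refine ⟨Cp + Cm + C, fun r hr => ?_⟩
  have h1 := hCp r hr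
  have h2 := hCm r hr
  have h3 := hC r hr
  set Ip' := ∫ z in annulus 1 r, z⁻¹ ∂(Measure.map (· + w) νp)
  set Im' := ∫ z in annulus 1 r, z⁻¹ ∂(Measure.map (· + w) νm)
  set Ip := ∫ z in annulus 1 r, z⁻¹ ∂νp
  set Im := ∫ z in annulus 1 r, z⁻¹ ∂νm
  have key_eq : Ip' - Im' = ((Ip' - Ip) - (Im' - Im)) + (Ip - Im) := by ring
  rw [key_eq]
  calc ‖((Ip' - Ip) - (Im' - Im)) + (Ip - Im)‖
      ≤ ‖(Ip' - Ip) - (Im' - Im)‖ + ‖Ip - Im‖ := norm_add_le _ _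
    _ ≤ ‖Ip' - Ip‖ + ‖Im' - Im‖ + ‖Ip - Im‖ := by
        linarith [norm_sub_le (Ip' - Ip) (Im' - Im)]
    _ ≤ Cp + Cm + C := by linarith


/-- A signed measure `ν = νp - νm` of finite upper density
satisfies the Lindelöf condition iff its translate by any fixed `w ∈ ℂ`
does. -/
theorem stmt10 (νp νm : Measure ℂ)
    [IsFiniteMeasureOnCompacts νp] [IsFiniteMeasureOnCompacts νm]
    (hp : FiniteUpperDensity νp) (hm : FiniteUpperDensity νm) (w : ℂ) :
    LindelofCondition νp νm ↔
      LindelofCondition (Measure.map (· + w) νp) (Measure.map (· + w) νm) := by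
  constructor
  · exact lind_mp νp νm hp hm w
  · intro h
    haveI := isFiniteOnCompacts_map νp w
    haveI := isFiniteOnCompacts_map νm w
    have h' := lind_mp _ _ (fud_map νp hp w) (fud_map νm hm w) (-w) h
    rwa [map_cancel, map_cancel] at h'
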